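/- For every positive integer n, the number of partitions of n in which exactly one part value is repeated (appears with multiplicity at least 2) while all other part values appear exactly once, equals the difference between the total number of parts in all partitions of n into odd parts and the total number of parts in all partitions of n into distinct parts. -/

import Mathlib

open Finset

section EulerInlined

namespace Theorems100

theorem partition_theorem (n : ℕ) : #(Nat.Partition.odds n) = #(Nat.Partition.distincts n) :=
  Nat.Partition.card_odds_eq_card_distincts n

end Theorems100

end EulerInlined

open Finset Multiset Nat

namespace AndrewsCB

lemma msum_mono {s t : Multiset ℕ} (h : s ≤ t) : s.sum ≤ t.sum := by
  obtain ⟨u, rfl⟩ := Multiset.le_iff_exists_add.1 h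
  simp

lemma msum_sub {s t : Multiset ℕ} (h : t ≤ s) : (s - t).sum = s.sum - t.sum := by
  have h2 : s - t + t = s := tsub_add_cancel_of_le h
  have := congrArg Multiset.sum h2
  rw [Multiset.sum_add] at this
  omega

lemma rep_sum (k v : ℕ) : (Multiset.replicate k v).sum = v * k := by
  simp [Multiset.sum_replicate, Nat.mul_comm]

lemma count_mul_le {n : ℕ} (P : n.Partition) (v : ℕ) (hv : 1 ≤ v) :
    v * P.parts.count v ≤ n := by
  have h : Multiset.replicate (P.parts.count v) v ≤ P.parts :=
    Multiset.le_count_iff_replicate_le.1 le_rfl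
  have := msum_mono h
  rw [rep_sum, P.parts_sum] at this
  exact this

/-- add `k` copies of `v` to a partition -/
def addP {m n : ℕ} (P : m.Partition) (v k : ℕ) (hv : 0 < v) (h : m + v * k = n) :
    n.Partition where
  parts := P.parts + Multiset.replicate k v
  parts_pos := by
    intro i hi
    rcases Multiset.mem_add.1 hi with h' | h'
    · exact P.parts_pos h'
    · rw [Multiset.eq_of_mem_replicate h']; exact hv
  parts_sum := by rw [Multiset.sum_add, rep_sum, P.parts_sum, h]

@[simp] lemma addP_parts {m n : ℕ} (P : m.Partition) (v k : ℕ) (hv : 0 < v)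
    (h : m + v * k = n) : (addP P v k hv h).parts = P.parts + Multiset.replicate k v := rfl

/-- remove `k` copies of `v` from a partition -/
def remP {m n : ℕ} (P : n.Partition) (v k : ℕ)
    (hle : Multiset.replicate k v ≤ P.parts) (h : n - v * k = m) : m.Partition where
  parts := P.parts - Multiset.replicate k v
  parts_pos := by
    intro i hi
    exact P.parts_pos (Multiset.mem_of_le (tsub_le_self) hi)
  parts_sum := by rw [msum_sub hle, rep_sum, P.parts_sum, h]

@[simp] lemma remP_parts {m n : ℕ} (P : n.Partition) (v k : ℕ)
    (hle : Multiset.replicate k v ≤ P.parts) (h : n - v * k = m) :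
    (remP P v k hle h).parts = P.parts - Multiset.replicate k v := rfl

lemma odds_filter_card {n : ℕ} (v k : ℕ) (hv : Odd v) (hk : 1 ≤ k) (h : v * k ≤ n) :
    ((Nat.Partition.odds n).filter (fun P => k ≤ P.parts.count v)).card
      = (Nat.Partition.odds (n - v * k)).card := by
  have hv0 : 0 < v := hv.pos
  refine Finset.card_bij'
    (fun P hP => remP P v k
      (Multiset.le_count_iff_replicate_le.1 (Finset.mem_filter.1 hP).2) rfl)
    (fun Q hQ => addP Q v k hv0 (by omega)) ?_ ?_ ?_ ?_
  · intro P hP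
    simp only [Nat.Partition.odds, Nat.Partition.restricted, Finset.mem_filter, Finset.mem_univ, true_and] at hP ⊢
    intro i hi
    exact hP.1 i (Multiset.mem_of_le (tsub_le_self) hi)
  · intro Q hQ
    simp only [Nat.Partition.odds, Nat.Partition.restricted, Finset.mem_filter, Finset.mem_univ, true_and] at hQ ⊢
    constructor
    · intro i hi
      rcases Multiset.mem_add.1 hi with h' | h'
      · exact hQ i h'
      · rw [Multiset.eq_of_mem_replicate h']
        exact (Nat.not_even_iff_odd).2 hv
    · simp only [addP_parts, Multiset.count_add, Multiset.count_replicate_self]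
      omega
  · intro P hP
    ext1
    simp only [addP_parts, remP_parts]
    exact tsub_add_cancel_of_le
      (Multiset.le_count_iff_replicate_le.1 (Finset.mem_filter.1 hP).2)
  · intro Q hQ
    ext1
    simp only [addP_parts, remP_parts]
    exact add_tsub_cancel_right _ _

end AndrewsCB

namespace AndrewsCB

def q (m : ℕ) : ℕ := (Nat.Partition.distincts m).card

lemma le_count_imp {n : ℕ} (P : n.Partition) {v k : ℕ} (hv : 1 ≤ v)
    (h : k ≤ P.parts.count v) : v * k ≤ n := by
  have := msum_mono (Multiset.le_count_iff_replicate_le.1 h)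
  rw [rep_sum, P.parts_sum] at this
  exact this

lemma card_parts_eq {n : ℕ} (P : n.Partition) :
    (Multiset.card P.parts : ℤ) = ∑ v ∈ Finset.Icc 1 n, (P.parts.count v : ℤ) := by
  have h1 : ∑ v ∈ P.parts.toFinset, P.parts.count v = Multiset.card P.parts :=
    Multiset.toFinset_sum_count_eq _
  have h2 : P.parts.toFinset ⊆ Finset.Icc 1 n := by
    intro i hi
    rw [Multiset.mem_toFinset] at hi
    have := P.parts_pos hi
    have h3 : i ≤ P.parts.sum := Multiset.le_sum_of_mem hi
    rw [P.parts_sum] at h3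
    simp only [Finset.mem_Icc]
    omega
  rw [← h1, Finset.sum_subset h2]
  · push_cast; rfl
  · intro x _ hx
    rw [Multiset.mem_toFinset] at hx
    exact Multiset.count_eq_zero_of_notMem hx

lemma count_eq_sum_ite {c n : ℕ} (h : c ≤ n) :
    (c : ℤ) = ∑ k ∈ Finset.Icc 1 n, if k ≤ c then (1 : ℤ) else 0 := by
  rw [← Finset.sum_filter]
  have : (Finset.Icc 1 n).filter (fun k => k ≤ c) = Finset.Icc 1 c := by
    ext x; simp only [Finset.mem_filter, Finset.mem_Icc]; omega
  simp [this]

lemma odds_sum (n : ℕ) :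
    (∑ P ∈ Nat.Partition.odds n, (Multiset.card P.parts : ℤ)) =
      ∑ p ∈ Finset.Icc 1 n ×ˢ Finset.Icc 1 n,
        if p.1 * p.2 ≤ n then
          (if Odd p.1 then (1:ℤ) else 0) * (Nat.Partition.odds (n - p.1 * p.2)).card
        else 0 := by
  rw [Finset.sum_product]
  simp only [Finset.sum_congr rfl (fun P _ => card_parts_eq P)]
  rw [Finset.sum_comm]
  apply Finset.sum_congr rfl
  intro v hv
  rw [Finset.mem_Icc] at hv
  by_cases hodd : Odd v
  · have hcount : ∀ P ∈ Nat.Partition.odds n, (P.parts.count v : ℤ)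
        = ∑ k ∈ Finset.Icc 1 n, if k ≤ P.parts.count v then (1:ℤ) else 0 := by
      intro P _
      exact count_eq_sum_ite (by have := le_count_imp P hv.1 (le_refl _); nlinarith)
    rw [Finset.sum_congr rfl hcount, Finset.sum_comm]
    apply Finset.sum_congr rfl
    intro k hk
    rw [Finset.mem_Icc] at hk
    simp only [hodd, if_true, one_mul]
    by_cases hvk : v * k ≤ n
    · rw [if_pos hvk, Finset.sum_boole, odds_filter_card v k hodd hk.1 hvk]
    · rw [if_neg hvk]
      rw [Finset.sum_eq_zero]
      intro P hP
      rw [if_neg]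
      intro hc
      exact hvk (le_count_imp P hv.1 hc)
  · simp only [hodd, if_false, zero_mul, ite_self, Finset.sum_const_zero]
    apply Finset.sum_eq_zero
    intro P hP
    rw [Nat.Partition.odds, Nat.Partition.restricted, Finset.mem_filter] at hP
    rw [Multiset.count_eq_zero_of_notMem]
    · rfl
    · intro hmem
      exact hP.2 v hmem (Nat.not_odd_iff_even.1 hodd)

end AndrewsCB

namespace AndrewsCB

lemma mem_imp_le {n : ℕ} (P : n.Partition) {v : ℕ} (h : v ∈ P.parts) : v ≤ n := by
  have := Multiset.le_sum_of_mem h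
  rwa [P.parts_sum] at this

lemma dist_bij {v m : ℕ} (hv : 1 ≤ v) (hvm : v ≤ m) :
    ((Nat.Partition.distincts m).filter (fun Q => v ∈ Q.parts)).card
      = ((Nat.Partition.distincts (m - v)).filter (fun Q => v ∉ Q.parts)).card := by
  have hrep : ∀ (Q : m.Partition), v ∈ Q.parts → Multiset.replicate 1 v ≤ Q.parts := by
    intro Q h
    exact Multiset.le_count_iff_replicate_le.1 (Multiset.one_le_count_iff_mem.2 h)
  refine Finset.card_bij'
    (fun Q hQ => remP Q v 1 (hrep Q (Finset.mem_filter.1 hQ).2) (by omega))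
    (fun Q hQ => addP Q v 1 hv (by omega)) ?_ ?_ ?_ ?_
  · intro Q hQ
    simp only [Nat.Partition.distincts, Finset.mem_filter, Finset.mem_univ, true_and] at hQ ⊢
    obtain ⟨⟨hnd, -⟩, hmem⟩ : (Q.parts.Nodup ∧ True) ∧ v ∈ Q.parts := by
      constructor
      · exact ⟨hQ.1, trivial⟩
      · exact hQ.2
    rw [Multiset.nodup_iff_count_le_one] at hnd
    constructor
    · rw [Multiset.nodup_iff_count_le_one]
      intro a
      calc Multiset.count a (Q.parts - Multiset.replicate 1 v)
          ≤ Multiset.count a Q.parts := Multiset.count_le_of_le a tsub_le_self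
        _ ≤ 1 := hnd a
    · intro hc
      simp only [remP_parts] at hc
      rw [← Multiset.count_pos, Multiset.count_sub, Multiset.count_replicate_self] at hc
      have := hnd v
      omega
  · intro Q hQ
    simp only [Nat.Partition.distincts, Finset.mem_filter, Finset.mem_univ, true_and] at hQ ⊢
    obtain ⟨hnd, hnm⟩ := hQ
    rw [Multiset.nodup_iff_count_le_one] at hnd
    constructor
    · rw [Multiset.nodup_iff_count_le_one]
      intro a
      rw [addP_parts, Multiset.count_add, Multiset.count_replicate]
      have hha := hnd a
      by_cases ha : v = a
      · subst ha
        rw [Multiset.count_eq_zero_of_notMem hnm, if_pos rfl]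
      · rw [if_neg ha]
        omega
    · rw [addP_parts]
      exact Multiset.mem_add.2 (Or.inr (Multiset.mem_replicate.2 ⟨one_ne_zero, rfl⟩))
  · intro Q hQ
    ext1
    simp only [addP_parts, remP_parts]
    exact tsub_add_cancel_of_le (hrep Q (Finset.mem_filter.1 hQ).2)
  · intro Q hQ
    ext1
    simp only [addP_parts, remP_parts]
    exact add_tsub_cancel_right _ _

lemma dist_empty {v m : ℕ} (h : ¬ v ≤ m) :
    ((Nat.Partition.distincts m).filter (fun Q => v ∈ Q.parts)) = ∅ := by
  rw [Finset.filter_eq_empty_iff]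
  intro Q _
  intro hc
  exact h (mem_imp_le Q hc)

lemma dist_compl (v m : ℕ) :
    ((Nat.Partition.distincts m).filter (fun Q => v ∉ Q.parts)).card
      = q m - ((Nat.Partition.distincts m).filter (fun Q => v ∈ Q.parts)).card := by
  have := Finset.card_filter_add_card_filter_not
    (s := Nat.Partition.distincts m) (p := fun Q => v ∈ Q.parts)
  rw [q]
  omega

lemma D_alt (v : ℕ) (hv : 1 ≤ v) : ∀ m : ℕ,
    (((Nat.Partition.distincts m).filter (fun Q => v ∈ Q.parts)).card : ℤ)
      = ∑ k ∈ Finset.range m, (-1 : ℤ)^k *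
          (if v*(k+1) ≤ m then (q (m - v*(k+1)) : ℤ) else 0) := by
  intro m
  induction m using Nat.strong_induction_on with
  | _ m IH =>
  by_cases hvm : v ≤ m
  · obtain ⟨m', rfl⟩ : ∃ m', m = m' + 1 := ⟨m - 1, by omega⟩
    have hD : ((Nat.Partition.distincts (m'+1)).filter (fun Q => v ∈ Q.parts)).card
        = q (m'+1 - v) - ((Nat.Partition.distincts (m'+1-v)).filter (fun Q => v ∈ Q.parts)).card := by
      rw [dist_bij hv hvm, dist_compl]
    have hDle : ((Nat.Partition.distincts (m'+1-v)).filter (fun Q => v ∈ Q.parts)).card ≤ q (m'+1-v) :=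
      Finset.card_le_card (Finset.filter_subset _ _)
    rw [hD]
    push_cast [Nat.cast_sub hDle]
    rw [IH (m' + 1 - v) (by omega)]
    -- now manipulate RHS
    rw [Finset.sum_range_succ']
    simp only [pow_zero, one_mul, Nat.mul_one]
    rw [if_pos (by omega : v * (0+1) ≤ m' + 1)]
    have hstep : ∀ k, ((-1:ℤ)^(k+1)) *
        (if v*(k+1+1) ≤ m' + 1 then (q (m' + 1 - v*(k+1+1)) : ℤ) else 0)
        = -((-1:ℤ)^k * (if v*(k+1) ≤ m' + 1 - v then (q ((m' + 1 - v) - v*(k+1)) : ℤ) else 0)) := by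
      intro k
      have he : v*(k+1+1) = v*(k+1) + v := by ring
      have hiff : (v*(k+1+1) ≤ m' + 1) ↔ (v*(k+1) ≤ m' + 1 - v) := by omega
      have heq2 : m' + 1 - v*(k+1+1) = (m' + 1 - v) - v*(k+1) := by omega
      rw [pow_succ]
      by_cases hc : v*(k+1) ≤ m' + 1 - v
      · rw [if_pos (hiff.2 hc), if_pos hc, heq2]; ring
      · rw [if_neg (fun h => hc (hiff.1 h)), if_neg hc]; ring
    rw [Finset.sum_congr rfl (fun k _ => hstep k)]
    rw [Finset.sum_neg_distrib]
    have hext : ∑ k ∈ Finset.range m', ((-1:ℤ)^k *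
          (if v*(k+1) ≤ m' + 1 - v then (q ((m' + 1 - v) - v*(k+1)) : ℤ) else 0))
        = ∑ k ∈ Finset.range (m' + 1 - v), ((-1:ℤ)^k *
          (if v*(k+1) ≤ m' + 1 - v then (q ((m' + 1 - v) - v*(k+1)) : ℤ) else 0)) := by
      symm
      apply Finset.sum_subset
      · apply Finset.range_subset_range.2; omega
      · intro k hk hk2
        rw [Finset.mem_range] at hk hk2
        rw [if_neg, mul_zero]
        intro hc
        have : k + 1 ≤ v * (k+1) := by nlinarith
        omega
    rw [hext, Nat.mul_one]
    abel
  · rw [dist_empty hvm]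
    simp only [Finset.card_empty, Nat.cast_zero]
    symm
    apply Finset.sum_eq_zero
    intro k hk
    rw [if_neg, mul_zero]
    intro hc
    have : v ≤ v * (k+1) := by nlinarith
    omega

end AndrewsCB

namespace AndrewsCB

lemma dist_sum' (n : ℕ) :
    (∑ Q ∈ Nat.Partition.distincts n, (Multiset.card Q.parts : ℤ)) =
      ∑ p ∈ Finset.Icc 1 n ×ˢ Finset.Icc 1 n,
        if p.1 * p.2 ≤ n then ((-1:ℤ)^(p.2+1)) * (q (n - p.1 * p.2) : ℤ) else 0 := by
  rw [Finset.sum_product]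
  simp only [Finset.sum_congr rfl (fun Q _ => card_parts_eq Q)]
  rw [Finset.sum_comm]
  apply Finset.sum_congr rfl
  intro v hv
  rw [Finset.mem_Icc] at hv
  have hcount : ∀ Q ∈ Nat.Partition.distincts n, (Multiset.count v Q.parts : ℤ)
      = if v ∈ Q.parts then (1:ℤ) else 0 := by
    intro Q hQ
    rw [Nat.Partition.distincts, Finset.mem_filter] at hQ
    by_cases hm : v ∈ Q.parts
    · rw [if_pos hm]
      norm_cast
      have h1 := Multiset.nodup_iff_count_le_one.1 hQ.2 v
      have h2 := Multiset.one_le_count_iff_mem.2 hm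
      omega
    · rw [if_neg hm, Multiset.count_eq_zero_of_notMem hm]
      rfl
  rw [Finset.sum_congr rfl hcount, Finset.sum_boole]
  have := D_alt v hv.1 n
  rw [this]
  have hIcc : Finset.Icc 1 n = Finset.Ico 1 (n+1) := by
    ext x; simp [Finset.mem_Icc, Finset.mem_Ico]
  rw [hIcc, Finset.sum_Ico_eq_sum_range]
  simp only [Nat.add_sub_cancel]
  apply Finset.sum_congr rfl
  intro k _
  have h1k : 1 + k = k + 1 := by omega
  rw [h1k]
  by_cases hc : v * (k+1) ≤ n
  · rw [if_pos hc, if_pos hc, pow_succ, pow_succ]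
    ring
  · rw [if_neg hc, if_neg hc, mul_zero]

end AndrewsCB

namespace AndrewsCB

lemma F_eq_singleton {n : ℕ} {P : n.Partition} {j : ℕ}
    (h2 : 2 ≤ P.parts.count j) (h1 : ∀ p, p ≠ j → P.parts.count p ≤ 1) :
    P.parts.toFinset.filter (fun p => 2 ≤ P.parts.count p) = {j} := by
  ext p
  simp only [Finset.mem_filter, Multiset.mem_toFinset, Finset.mem_singleton]
  constructor
  · rintro ⟨hp, hc⟩
    by_contra hne
    have := h1 p hne
    omega
  · rintro rfl
    exact ⟨Multiset.count_pos.1 (by omega), h2⟩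

lemma singleton_F {n : ℕ} {P : n.Partition} {j : ℕ}
    (h : P.parts.toFinset.filter (fun p => 2 ≤ P.parts.count p) = {j}) :
    2 ≤ P.parts.count j ∧ ∀ p, p ≠ j → P.parts.count p ≤ 1 := by
  have hj : j ∈ P.parts.toFinset.filter (fun p => 2 ≤ P.parts.count p) := by
    rw [h]; exact Finset.mem_singleton_self j
  rw [Finset.mem_filter] at hj
  refine ⟨hj.2, ?_⟩
  intro p hne
  by_contra hc
  have hp : p ∈ P.parts.toFinset.filter (fun p => 2 ≤ P.parts.count p) := by
    rw [Finset.mem_filter, Multiset.mem_toFinset]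
    exact ⟨Multiset.count_pos.1 (by omega), by omega⟩
  rw [h, Finset.mem_singleton] at hp
  exact hne hp

lemma c_card (n : ℕ) :
    ((Finset.univ.filter (fun P : n.Partition =>
        (P.parts.toFinset.filter (fun p => 2 ≤ P.parts.count p)).card = 1)).card : ℤ) =
      ∑ p ∈ Finset.Icc 1 n ×ˢ Finset.Icc 1 n,
        if p.1 * p.2 ≤ n then (if Even p.1 then (1:ℤ) else 0) * (q (n - p.1 * p.2) : ℤ)
        else 0 := by
  classical
  set A : Finset (ℕ × ℕ) :=
    (Finset.Icc 1 n ×ˢ Finset.Icc 1 n).filter (fun p => Even p.1 ∧ p.1 * p.2 ≤ n) with hA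
  have h1 : ∑ p ∈ Finset.Icc 1 n ×ˢ Finset.Icc 1 n,
      (if p.1 * p.2 ≤ n then (if Even p.1 then (1:ℤ) else 0) * (q (n - p.1 * p.2) : ℤ) else 0)
      = ∑ p ∈ A, (q (n - p.1 * p.2) : ℤ) := by
    rw [hA, Finset.sum_filter]
    apply Finset.sum_congr rfl
    intro p _
    by_cases he : Even p.1 <;> by_cases hle : p.1 * p.2 ≤ n <;>
      simp [he, hle]
  rw [h1]
  have h2 : ∑ p ∈ A, (q (n - p.1 * p.2) : ℤ)
      = ((A.sigma fun p => Nat.Partition.distincts (n - p.1 * p.2)).card : ℤ) := by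
    rw [Finset.card_sigma]
    push_cast
    rfl
  rw [h2]
  norm_cast
  -- facts about members of A
  have hmemA : ∀ x ∈ A, 1 ≤ x.1 ∧ x.1 ≤ n ∧ 1 ≤ x.2 ∧ x.2 ≤ n ∧ Even x.1 ∧ x.1 * x.2 ≤ n := by
    intro x hx
    rw [hA, Finset.mem_filter, Finset.mem_product, Finset.mem_Icc, Finset.mem_Icc] at hx
    tauto
  symm
  apply Finset.card_bij (fun x hx => addP x.2 (x.1.1 / 2) (2 * x.1.2)
    (by
      have h := hmemA x.1 (Finset.mem_sigma.1 hx).1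
      obtain ⟨c, hc⟩ := h.2.2.2.2.1
      omega)
    (by
      have h := hmemA x.1 (Finset.mem_sigma.1 hx).1
      obtain ⟨c, hc⟩ := h.2.2.2.2.1
      have hd : x.1.1 / 2 = c := by omega
      have he : x.1.1 / 2 * (2 * x.1.2) = x.1.1 * x.1.2 := by rw [hd, hc]; ring
      rw [he]
      omega))
  -- maps into the c-set
  · intro x hx
    rw [Finset.mem_sigma] at hx
    have h := hmemA x.1 hx.1
    have hQ : x.2.parts.Nodup := by
      have := hx.2
      rw [Nat.Partition.distincts, Finset.mem_filter] at this
      exact this.2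
    rw [Multiset.nodup_iff_count_le_one] at hQ
    rw [Finset.mem_filter]
    refine ⟨Finset.mem_univ _, ?_⟩
    rw [F_eq_singleton (j := x.1.1 / 2)]
    · simp
    · simp only [addP_parts, Multiset.count_add, Multiset.count_replicate_self]
      omega
    · intro p hne
      simp only [addP_parts, Multiset.count_add, Multiset.count_replicate]
      rw [if_neg (fun hh => hne hh.symm)]
      have := hQ p
      omega
  -- injectivity
  · rintro ⟨⟨xv, xk⟩, xQ⟩ hx ⟨⟨yv, yk⟩, yQ⟩ hy hxy
    rw [Finset.mem_sigma] at hx hy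
    have hxA := hmemA _ hx.1
    have hyA := hmemA _ hy.1
    simp only at hxA hyA
    have hyQ := Multiset.nodup_iff_count_le_one.1 ((Finset.mem_filter.1 hy.2).2)
    have hxQ := Multiset.nodup_iff_count_le_one.1 ((Finset.mem_filter.1 hx.2).2)
    simp only at hyQ hxQ
    have hparts : xQ.parts + Multiset.replicate (2 * xk) (xv / 2)
        = yQ.parts + Multiset.replicate (2 * yk) (yv / 2) := by
      have := congrArg Nat.Partition.parts hxy
      simpa [addP_parts] using this
    have hj : xv / 2 = yv / 2 := by
      by_contra hne
      have hjx : 2 ≤ Multiset.count (xv / 2)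
          (xQ.parts + Multiset.replicate (2 * xk) (xv / 2)) := by
        simp only [Multiset.count_add, Multiset.count_replicate_self]
        omega
      rw [hparts] at hjx
      simp only [Multiset.count_add, Multiset.count_replicate] at hjx
      rw [if_neg (fun hh => hne hh.symm)] at hjx
      have := hyQ (xv / 2)
      omega
    have hv : xv = yv := by
      obtain ⟨c, hc⟩ := hxA.2.2.2.2.1
      obtain ⟨d, hd⟩ := hyA.2.2.2.2.1
      omega
    subst hv
    rw [← hj] at hparts
    have hcnt : Multiset.count (xv / 2) xQ.parts + 2 * xk
        = Multiset.count (xv / 2) yQ.parts + 2 * yk := by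
      have := congrArg (Multiset.count (xv / 2)) hparts
      simpa [Multiset.count_add, Multiset.count_replicate_self] using this
    have hk : xk = yk := by
      have h1 := hxQ (xv / 2)
      have h2 := hyQ (xv / 2)
      omega
    subst hk
    simp only [Sigma.mk.inj_iff, heq_eq_eq, true_and]
    exact Nat.Partition.ext (add_right_cancel hparts)
  -- surjectivity
  · intro P hP
    rw [Finset.mem_filter] at hP
    obtain ⟨j, hj⟩ := Finset.card_eq_one.1 hP.2
    obtain ⟨hj2, hjuniq⟩ := singleton_F hj
    have hjpos : 0 < j := P.parts_pos (Multiset.count_pos.1 (by omega))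
    set t := P.parts.count j with ht
    have hjt : j * t ≤ n := count_mul_le P j hjpos
    set k := t / 2 with hk
    have hrep : Multiset.replicate (2 * k) j ≤ P.parts :=
      Multiset.le_count_iff_replicate_le.1 (by omega)
    have hsub : n - j * (2 * k) = n - (2 * j) * k := by
      rw [show j * (2 * k) = (2 * j) * k by ring]
    have h2k : 2 * k ≤ t := by omega
    have hk1 : 1 ≤ k := by omega
    have h2jk : 2 * j * k ≤ j * t := by
      calc 2 * j * k = j * (2 * k) := by ring
        _ ≤ j * t := Nat.mul_le_mul_left j h2k
    have e1 : 2 * j ≤ 2 * j * k := Nat.le_mul_of_pos_right _ (by omega)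
    have e4 : t ≤ j * t := Nat.le_mul_of_pos_left t hjpos
    have hn2j : 2 * j ≤ n := le_trans e1 (le_trans h2jk hjt)
    have hkt : k ≤ t := by omega
    have hkn : k ≤ n := le_trans hkt (le_trans e4 hjt)
    have h2jkn : 2 * j * k ≤ n := le_trans h2jk hjt
    refine ⟨⟨(2 * j, k), remP P j (2 * k) hrep hsub⟩, ?_, ?_⟩
    · rw [Finset.mem_sigma]
      constructor
      · rw [hA, Finset.mem_filter, Finset.mem_product, Finset.mem_Icc, Finset.mem_Icc]
        simp only
        exact ⟨⟨⟨by omega, hn2j⟩, ⟨by omega, hkn⟩⟩, ⟨⟨j, by ring⟩, h2jkn⟩⟩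
      · rw [Nat.Partition.distincts, Finset.mem_filter]
        refine ⟨Finset.mem_univ _, ?_⟩
        rw [Multiset.nodup_iff_count_le_one]
        intro p
        simp only [remP_parts, Multiset.count_sub, Multiset.count_replicate]
        by_cases hp : j = p
        · subst hp
          rw [if_pos rfl]
          omega
        · rw [if_neg hp]
          have := hjuniq p (fun hh => hp hh.symm)
          omega
    · apply Nat.Partition.ext
      simp only [addP_parts, remP_parts]
      have hjdiv : 2 * j / 2 = j := by omega
      rw [hjdiv]
      exact tsub_add_cancel_of_le hrep

end AndrewsCB


namespace AndrewsCB

/-- weighted sum over divisor pairs -/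
def S (n : ℕ) (f : ℕ → ℕ → ℤ) : ℤ :=
  ∑ p ∈ Finset.Icc 1 n ×ˢ Finset.Icc 1 n,
    if p.1 * p.2 ≤ n then f p.1 p.2 * q (n - p.1 * p.2) else 0

lemma S_swap (n : ℕ) (g : ℕ → ℤ) : S n (fun v _ => g v) = S n (fun _ k => g k) := by
  unfold S
  apply Finset.sum_nbij' (fun p => Prod.swap p) (fun p => Prod.swap p) <;>
    simp [Finset.mem_product, mul_comm, and_comm]

lemma S_congr (n : ℕ) (f g : ℕ → ℕ → ℤ) (h : ∀ v k, f v k = g v k) : S n f = S n g := by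
  unfold S; exact Finset.sum_congr rfl (fun p _ => by rw [h])

lemma S_sub (n : ℕ) (f g : ℕ → ℕ → ℤ) :
    S n (fun v k => f v k - g v k) = S n f - S n g := by
  unfold S
  rw [← Finset.sum_sub_distrib]
  apply Finset.sum_congr rfl
  intro p _
  split <;> ring

lemma euler_card (m : ℕ) : ((Nat.Partition.odds m).card : ℤ) = (q m : ℤ) := by
  have := Theorems100.partition_theorem m
  rw [q]
  exact_mod_cast this

lemma odds_sum_S (n : ℕ) :
    (∑ P ∈ Nat.Partition.odds n, (Multiset.card P.parts : ℤ)) =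
      S n (fun v _ => if Odd v then 1 else 0) := by
  rw [odds_sum n]
  unfold S
  apply Finset.sum_congr rfl
  intro p _
  by_cases hle : p.1 * p.2 ≤ n
  · rw [if_pos hle, if_pos hle, euler_card]
  · rw [if_neg hle, if_neg hle]

lemma dist_sum_S (n : ℕ) :
    (∑ P ∈ Nat.Partition.distincts n, (Multiset.card P.parts : ℤ)) =
      S n (fun _ k => (-1 : ℤ)^(k+1)) := by
  rw [dist_sum' n]
  rfl

lemma c_sum_S (n : ℕ) :
    ((Finset.univ.filter (fun P : n.Partition =>
        (P.parts.toFinset.filter (fun p => 2 ≤ P.parts.count p)).card = 1)).card : ℤ) =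
      S n (fun v _ => if Even v then 1 else 0) := by
  rw [c_card n]
  rfl

end AndrewsCB

theorem andrews_c_eq_b (n : ℕ) (hn : 0 < n) :
    ((Finset.univ.filter (fun P : n.Partition =>
        (P.parts.toFinset.filter (fun p => 2 ≤ P.parts.count p)).card = 1)).card : ℤ) =
      (∑ P ∈ Nat.Partition.odds n, (Multiset.card P.parts : ℤ)) -
        ∑ P ∈ Nat.Partition.distincts n, (Multiset.card P.parts : ℤ) := by
  rw [AndrewsCB.odds_sum_S, AndrewsCB.dist_sum_S, AndrewsCB.c_sum_S]
  have h1 : AndrewsCB.S n (fun _ k => (-1 : ℤ)^(k+1)) =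
      AndrewsCB.S n (fun _ k => (if Odd k then (1:ℤ) else 0) - (if Even k then 1 else 0)) := by
    apply AndrewsCB.S_congr
    intro v k
    rcases Nat.even_or_odd k with h | h
    · simp [h, Nat.not_odd_iff_even.2 h, pow_succ, (Even.neg_one_pow h)]
    · simp [h, Nat.not_even_iff_odd.2 h, pow_succ, (Odd.neg_one_pow h)]
  rw [h1, AndrewsCB.S_sub, ← AndrewsCB.S_swap n (fun k => if Odd k then (1:ℤ) else 0),
    ← AndrewsCB.S_swap n (fun k => if Even k then (1:ℤ) else 0)]
  ring
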